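/- arXiv:2105.07840 — 6 statements merged into one kernel-verified Lean document; each statement's English description precedes it below -/
import Mathlib

section
/- Let a = (a_1, a_2, ...) and b = (b_1, b_2, ...) be partitions of nonnegative integers (weakly decreasing, finitely supported), with conjugate partitions p = (p_1, p_2, ...) and q = (q_1, q_2, ...) respectively, where p_k = #{i : a_i ≥ k} and q_k = #{i : b_i ≥ k}. Let k ≥ 0 be an integer. Then a_j ≥ b_{j+k} for all j ≥ 1 if and only if p_j ≥ q_j − k for all j ≥ 1. -/
private lemma my_mono (c : ℕ → ℕ) (hc : ∀ i, 1 ≤ i → c (i + 1) ≤ c i) :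
    ∀ i j, 1 ≤ i → i ≤ j → c j ≤ c i := by
  intro i j hi hij
  induction j with
  | zero => omega
  | succ n ih =>
    rcases Nat.eq_or_lt_of_le hij with h | h
    · subst h; exact le_rfl
    · have hin : i ≤ n := by omega
      exact le_trans (hc n (by omega)) (ih hin)

private lemma my_fin (c : ℕ → ℕ) (hc0 : ∃ N, ∀ i, N ≤ i → c i = 0) (m : ℕ) (hm : 1 ≤ m) :
    {j | 1 ≤ j ∧ m ≤ c j}.Finite := by
  obtain ⟨N, hN⟩ := hc0
  apply Set.Finite.subset (Set.finite_Iio N)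
  rintro x ⟨hx1, hx2⟩
  by_contra hx
  simp only [Set.mem_Iio, not_lt] at hx
  have := hN x hx
  omega

private lemma factA (c : ℕ → ℕ) (hc : ∀ i, 1 ≤ i → c (i + 1) ≤ c i)
    (hc0 : ∃ N, ∀ i, N ≤ i → c i = 0) (m i : ℕ) (hm : 1 ≤ m) (hi : 1 ≤ i) (h : m ≤ c i) :
    i ≤ {j | 1 ≤ j ∧ m ≤ c j}.ncard := by
  have hfin := my_fin c hc0 m hm
  have hsub : Set.Icc 1 i ⊆ {j | 1 ≤ j ∧ m ≤ c j} := by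
    rintro x ⟨hx1, hx2⟩
    exact ⟨hx1, le_trans h (my_mono c hc x i hx1 hx2)⟩
  have := Set.ncard_le_ncard hsub hfin
  rwa [← Finset.coe_Icc, Set.ncard_coe_finset, Nat.card_Icc, Nat.add_sub_cancel] at this

private lemma factB (c : ℕ → ℕ) (hc : ∀ i, 1 ≤ i → c (i + 1) ≤ c i)
    (m i : ℕ) (hm : 1 ≤ m) (hi : 1 ≤ i) (h : i ≤ {j | 1 ≤ j ∧ m ≤ c j}.ncard) :
    m ≤ c i := by
  by_contra hcon
  push_neg at hcon
  have hsub : {j | 1 ≤ j ∧ m ≤ c j} ⊆ Set.Icc 1 (i - 1) := by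
    rintro x ⟨hx1, hx2⟩
    refine ⟨hx1, ?_⟩
    by_contra hx
    push_neg at hx
    have hix : i ≤ x := by omega
    have := my_mono c hc i x hi hix
    omega
  have h2 := Set.ncard_le_ncard hsub (Set.finite_Icc 1 (i - 1))
  rw [← Finset.coe_Icc, Set.ncard_coe_finset, Nat.card_Icc] at h2
  omega

/-- Lemma 4.2: for partitions `a`, `b` (indexed from 1, weakly decreasing, finitely
supported) with conjugate partitions `p`, `q`, and an integer `k ≥ 0`:
`a_j ≥ b_{j+k}` for all `j ≥ 1` iff `p_j ≥ q_j − k` for all `j ≥ 1`. -/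
theorem stmt0 (a b : ℕ → ℕ)
    (ha : ∀ i, 1 ≤ i → a (i + 1) ≤ a i) (hb : ∀ i, 1 ≤ i → b (i + 1) ≤ b i)
    (ha0 : ∃ N, ∀ i, N ≤ i → a i = 0) (hb0 : ∃ N, ∀ i, N ≤ i → b i = 0)
    (p q : ℕ → ℕ)
    (hp : ∀ k, 1 ≤ k → p k = Set.ncard {i | 1 ≤ i ∧ k ≤ a i})
    (hq : ∀ k, 1 ≤ k → q k = Set.ncard {i | 1 ≤ i ∧ k ≤ b i})
    (k : ℕ) :
    (∀ j, 1 ≤ j → b (j + k) ≤ a j) ↔ (∀ j, 1 ≤ j → (q j : ℤ) - (k : ℤ) ≤ (p j : ℤ)) := by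
  constructor
  · intro H j hj
    rw [hp j hj, hq j hj]
    by_cases hqk : Set.ncard {i | 1 ≤ i ∧ j ≤ b i} ≤ k
    · have : (0:ℤ) ≤ Set.ncard {i | 1 ≤ i ∧ j ≤ a i} := Int.natCast_nonneg _
      omega
    · push_neg at hqk
      set i := Set.ncard {i | 1 ≤ i ∧ j ≤ b i} - k with hidef
      have hi1 : 1 ≤ i := by omega
      have hbik : j ≤ b (i + k) := by
        apply factB b hb j (i + k) hj (by omega)
        omega
      have haij : j ≤ a i := le_trans hbik (H i hi1)
      have := factA a ha ha0 j i hj hi1 haij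
      omega
  · intro H j hj
    by_cases hbz : b (j + k) = 0
    · omega
    · have hm : 1 ≤ b (j + k) := by omega
      have hqm : j + k ≤ Set.ncard {i | 1 ≤ i ∧ b (j + k) ≤ b i} :=
        factA b hb hb0 (b (j + k)) (j + k) hm (by omega) le_rfl
      have hH := H (b (j + k)) hm
      rw [hp _ hm, hq _ hm] at hH
      apply factB a ha (b (j + k)) j hm hj
      omega
end

section
/- Let c = (c_1, ..., c_{m+1}) and d = (d_1, ..., d_m) be weakly decreasing finite sequences of nonnegative integers with d_i < c_i for some i. Let r = (r_1, r_2, ...) and s = (s_1, s_2, ...) be the conjugate partitions of c and d, and set r_0 = m+1, s_0 = m. Let g = max{i ≥ 1 : r_i > s_i} and h = min{i : d_i < c_i}. Then g = c_h. -/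
/-- Lemma 4.4, equation (4.2): with `c = (c_1,…,c_{m+1})`, `d = (d_1,…,d_m)` weakly
decreasing sequences of nonnegative integers, `r`, `s` their conjugate partitions,
`h = min{i : d_i < c_i}` and `g = max{i ≥ 1 : r_i > s_i}`, one has `g = c_h`. -/
theorem stmt2 (m : ℕ) (c d : ℕ → ℕ)
    (hc : ∀ i j, 1 ≤ i → i ≤ j → j ≤ m + 1 → c j ≤ c i)
    (hd : ∀ i j, 1 ≤ i → i ≤ j → j ≤ m → d j ≤ d i)
    (r s : ℕ → ℕ)
    (hr : ∀ k, 1 ≤ k → r k = ((Finset.Icc 1 (m + 1)).filter fun i => k ≤ c i).card)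
    (hs : ∀ k, 1 ≤ k → s k = ((Finset.Icc 1 m).filter fun i => k ≤ d i).card)
    (h g : ℕ)
    (hh1 : 1 ≤ h) (hh2 : h ≤ m) (hh3 : d h < c h)
    (hh4 : ∀ i, 1 ≤ i → i < h → c i ≤ d i)
    (hg1 : 1 ≤ g) (hg2 : s g < r g)
    (hg3 : ∀ i, g < i → r i ≤ s i) :
    g = c h := by
  have hch1 : 1 ≤ c h := Nat.lt_of_le_of_lt (Nat.zero_le _) hh3
  -- Claim A : s (c h) < r (c h)
  have hA : s (c h) < r (c h) := by
    have hsle : s (c h) ≤ h - 1 := by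
      rw [hs _ hch1]
      have : ((Finset.Icc 1 m).filter fun i => c h ≤ d i) ⊆ Finset.Icc 1 (h - 1) := by
        intro i hi
        simp only [Finset.mem_filter, Finset.mem_Icc] at hi ⊢
        refine ⟨hi.1.1, ?_⟩
        by_contra hcon
        push_neg at hcon
        have hhi : h ≤ i := by omega
        have : d i ≤ d h := hd h i hh1 hhi hi.1.2
        omega
      calc ((Finset.Icc 1 m).filter fun i => c h ≤ d i).card
          ≤ (Finset.Icc 1 (h - 1)).card := Finset.card_le_card this
        _ = h - 1 := by rw [Nat.card_Icc]; omega
    have hrge : h ≤ r (c h) := by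
      rw [hr _ hch1]
      have : Finset.Icc 1 h ⊆ (Finset.Icc 1 (m + 1)).filter fun i => c h ≤ c i := by
        intro i hi
        simp only [Finset.mem_filter, Finset.mem_Icc] at hi ⊢
        exact ⟨⟨hi.1, by omega⟩, hc i h hi.1 hi.2 (by omega)⟩
      calc h = (Finset.Icc 1 h).card := by rw [Nat.card_Icc]; omega
        _ ≤ _ := Finset.card_le_card this
    omega
  -- Claim B : for k > c h, r k ≤ s k
  have hB : ∀ k, c h < k → r k ≤ s k := by
    intro k hk
    have hk1 : 1 ≤ k := by omega
    rw [hr _ hk1, hs _ hk1]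
    apply Finset.card_le_card
    intro i hi
    simp only [Finset.mem_filter, Finset.mem_Icc] at hi ⊢
    have hih : i < h := by
      by_contra hcon
      push_neg at hcon
      have : c i ≤ c h := hc h i hh1 hcon hi.1.2
      omega
    have hci : c i ≤ d i := hh4 i hi.1.1 hih
    exact ⟨⟨hi.1.1, by omega⟩, by omega⟩
  rcases lt_trichotomy g (c h) with hlt | heq | hgt
  · exact absurd (hg3 _ hlt) (by omega)
  · exact heq
  · exact absurd (hB g hgt) (by omega)
end

section
/- Let c = (c_1, ..., c_{m+1}) and d = (d_1, ..., d_m) be weakly decreasing finite sequences of nonnegative integers with d_i < c_i for some i. Let r and s be the conjugate partitions of c and d, let g = max{i ≥ 1 : r_i > s_i} and h = min{i : d_i < c_i}. Then ∑_{j=1}^{g} (r_j − s_j − 1) = ∑_{j=h}^{m} (c_{j+1} − d_j). -/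
lemma swapSum (n g : ℕ) (f : ℕ → ℕ) :
    ∑ j ∈ Finset.Icc 1 g, ((Finset.Icc 1 n).filter fun i => j ≤ f i).card
      = ∑ i ∈ Finset.Icc 1 n, min (f i) g := by
  simp_rw [Finset.card_filter]
  rw [Finset.sum_comm]
  refine Finset.sum_congr rfl fun i _ => ?_
  rw [← Finset.card_filter]
  have : (Finset.Icc 1 g).filter (fun j => j ≤ f i) = Finset.Icc 1 (min (f i) g) := by
    ext j
    simp only [Finset.mem_filter, Finset.mem_Icc]
    omega
  rw [this, Nat.card_Icc]
  omega



/-- Lemma 4.4, equation (4.2): with `c = (c_1,…,c_{m+1})`, `d = (d_1,…,d_m)` weakly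
decreasing sequences of nonnegative integers, `r`, `s` their conjugate partitions,
`h = min{i : d_i < c_i}` and `g = max{i ≥ 1 : r_i > s_i}`, then ∑_{j=1}^{g} (r_j − s_j − 1) = ∑_{j=h}^{m} (c_{j+1} − d_j). -/
theorem stmt3 (m : ℕ) (c d : ℕ → ℕ)
    (hc : ∀ i j, 1 ≤ i → i ≤ j → j ≤ m + 1 → c j ≤ c i)
    (hd : ∀ i j, 1 ≤ i → i ≤ j → j ≤ m → d j ≤ d i)
    (r s : ℕ → ℕ)
    (hr : ∀ k, 1 ≤ k → r k = ((Finset.Icc 1 (m + 1)).filter fun i => k ≤ c i).card)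
    (hs : ∀ k, 1 ≤ k → s k = ((Finset.Icc 1 m).filter fun i => k ≤ d i).card)
    (h g : ℕ)
    (hh1 : 1 ≤ h) (hh2 : h ≤ m) (hh3 : d h < c h)
    (hh4 : ∀ i, 1 ≤ i → i < h → c i ≤ d i)
    (hg1 : 1 ≤ g) (hg2 : s g < r g)
    (hg3 : ∀ i, g < i → r i ≤ s i) :
    ∑ j ∈ Finset.Icc 1 g, ((r j : ℤ) - (s j : ℤ) - 1) = ∑ j ∈ Finset.Icc h m, ((c (j + 1) : ℤ) - (d j : ℤ)) := by
  -- Step 1: g = c h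
  have hgle : g ≤ c h := by
    by_contra hlt
    push_neg at hlt
    have hrs : r g ≤ s g := by
      rw [hr g hg1, hs g hg1]
      apply Finset.card_le_card
      intro i hi
      simp only [Finset.mem_filter, Finset.mem_Icc] at hi ⊢
      obtain ⟨⟨h1, h2⟩, h3⟩ := hi
      have hih : i < h := by
        by_contra hge
        push_neg at hge
        have := hc h i hh1 hge h2
        omega
      exact ⟨⟨h1, by omega⟩, le_trans h3 (hh4 i h1 hih)⟩
    omega
  have hcle : c h ≤ g := by
    have hch1 : 1 ≤ c h := by omega
    by_contra hlt
    push_neg at hlt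
    have hrs := hg3 (c h) hlt
    have hrc : h ≤ r (c h) := by
      rw [hr _ hch1]
      have hsub : Finset.Icc 1 h ⊆ (Finset.Icc 1 (m + 1)).filter fun i => c h ≤ c i := by
        intro i hi
        simp only [Finset.mem_filter, Finset.mem_Icc] at hi ⊢
        exact ⟨⟨hi.1, by omega⟩, hc i h hi.1 hi.2 (by omega)⟩
      have := Finset.card_le_card hsub
      rw [Nat.card_Icc] at this
      omega
    have hsc : s (c h) ≤ h - 1 := by
      rw [hs _ hch1]
      have hsub : (Finset.Icc 1 m).filter (fun i => c h ≤ d i) ⊆ Finset.Icc 1 (h - 1) := by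
        intro i hi
        simp only [Finset.mem_filter, Finset.mem_Icc] at hi ⊢
        obtain ⟨⟨h1, h2⟩, h3⟩ := hi
        have hih : i < h := by
          by_contra hge
          push_neg at hge
          have := hd h i hh1 hge h2
          omega
        exact ⟨h1, by omega⟩
      have := Finset.card_le_card hsub
      rw [Nat.card_Icc] at this
      omega
    omega
  have hgch : g = c h := le_antisymm hgle hcle
  -- Step 2: sums of r and s via conjugation
  have key1 : ∑ j ∈ Finset.Icc 1 g, r j = ∑ i ∈ Finset.Icc 1 (m + 1), min (c i) g := by
    rw [← swapSum (m + 1) g c]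
    refine Finset.sum_congr rfl fun j hj => ?_
    rw [Finset.mem_Icc] at hj
    exact hr j hj.1
  have key2 : ∑ j ∈ Finset.Icc 1 g, s j = ∑ i ∈ Finset.Icc 1 m, min (d i) g := by
    rw [← swapSum m g d]
    refine Finset.sum_congr rfl fun j hj => ?_
    rw [Finset.mem_Icc] at hj
    exact hs j hj.1
  -- interval conversions
  have hIcc : ∀ x : ℕ, Finset.Icc 1 x = Finset.Ioc 0 x := by
    intro x; ext i; simp only [Finset.mem_Icc, Finset.mem_Ioc]; omega
  have hIcc2 : Finset.Icc h m = Finset.Ioc (h - 1) m := by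
    ext i; simp only [Finset.mem_Icc, Finset.mem_Ioc]; omega
  -- evaluate A
  have hA : ∑ i ∈ Finset.Icc 1 (m + 1), min (c i) g
      = (h - 1) * g + (∑ i ∈ Finset.Ioc (h - 1) m, c i + c (m + 1)) := by
    rw [hIcc, ← Finset.sum_Ioc_consecutive _ (Nat.zero_le (h - 1)) (by omega : h - 1 ≤ m + 1)]
    congr 1
    · rw [Finset.sum_congr rfl (fun i hi => ?_), Finset.sum_const, Nat.card_Ioc, Nat.sub_zero,
        smul_eq_mul, mul_comm]
      rw [Finset.mem_Ioc] at hi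
      have : g ≤ c i := hgch ▸ hc i h (by omega) (by omega) (by omega)
      omega
    · rw [← Finset.sum_Ioc_succ_top (by omega : h - 1 ≤ m)]
      refine Finset.sum_congr rfl fun i hi => ?_
      rw [Finset.mem_Ioc] at hi
      have : c i ≤ g := hgch ▸ hc h i hh1 (by omega) (by omega)
      omega
  -- evaluate B
  have hB : ∑ i ∈ Finset.Icc 1 m, min (d i) g
      = (h - 1) * g + ∑ i ∈ Finset.Ioc (h - 1) m, d i := by
    rw [hIcc, ← Finset.sum_Ioc_consecutive _ (Nat.zero_le (h - 1)) (by omega : h - 1 ≤ m)]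
    congr 1
    · rw [Finset.sum_congr rfl (fun i hi => ?_), Finset.sum_const, Nat.card_Ioc, Nat.sub_zero,
        smul_eq_mul, mul_comm]
      rw [Finset.mem_Ioc] at hi
      have h1 : c i ≤ d i := hh4 i (by omega) (by omega)
      have h2 : g ≤ c i := hgch ▸ hc i h (by omega) (by omega) (by omega)
      omega
    · refine Finset.sum_congr rfl fun i hi => ?_
      rw [Finset.mem_Ioc] at hi
      have : d i ≤ d h := hd h i hh1 (by omega) hi.2
      omega
  -- shift reindex
  have hshift : ∑ i ∈ Finset.Ioc (h - 1) m, c (i + 1)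
      = ∑ i ∈ Finset.Ioc h (m + 1), c i := by
    have hmap : Finset.Ioc h (m + 1) = (Finset.Ioc (h - 1) m).map (addRightEmbedding 1) := by
      rw [Finset.map_add_right_Ioc]
      congr 1
      omega
    rw [hmap, Finset.sum_map]
    rfl
  have hX1 : ∑ i ∈ Finset.Ioc (h - 1) m, c i = c h + ∑ i ∈ Finset.Ioc h m, c i := by
    rw [← Finset.sum_Ioc_consecutive _ (by omega : h - 1 ≤ h) (by omega : h ≤ m)]
    congr 1
    have : Finset.Ioc (h - 1) h = {h} := by
      ext i; simp only [Finset.mem_Ioc, Finset.mem_singleton]; omega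
    rw [this, Finset.sum_singleton]
  have hX2 : ∑ i ∈ Finset.Ioc h (m + 1), c i = ∑ i ∈ Finset.Ioc h m, c i + c (m + 1) := by
    rw [← Finset.sum_Ioc_succ_top (by omega : h ≤ m)]
  -- casted facts
  have K1 : ∑ j ∈ Finset.Icc 1 g, (r j : ℤ)
      = ((h - 1) * g : ℕ) + (((c h : ℤ) + ∑ i ∈ Finset.Ioc h m, (c i : ℤ)) + (c (m + 1) : ℤ)) := by
    rw [← Nat.cast_sum, key1, hA, hX1]
    push_cast
    ring
  have K2 : ∑ j ∈ Finset.Icc 1 g, (s j : ℤ)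
      = ((h - 1) * g : ℕ) + ∑ i ∈ Finset.Ioc (h - 1) m, (d i : ℤ) := by
    rw [← Nat.cast_sum, key2, hB]
    push_cast
    ring
  have K3 : ∑ j ∈ Finset.Ioc (h - 1) m, (c (j + 1) : ℤ)
      = ∑ i ∈ Finset.Ioc h m, (c i : ℤ) + (c (m + 1) : ℤ) := by
    rw [← Nat.cast_sum, hshift, hX2]
    push_cast
    ring
  have K4 : ∑ _j ∈ Finset.Icc 1 g, (1 : ℤ) = g := by
    simp [Nat.card_Icc]
  have hgz : (g : ℤ) = (c h : ℤ) := by exact_mod_cast hgch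
  rw [hIcc2]
  rw [Finset.sum_sub_distrib, Finset.sum_sub_distrib, Finset.sum_sub_distrib, K1, K2, K3, K4]
  linarith
end

section
/- Let c = (c_1, ..., c_m) and d = (d_1, ..., d_{m+1}) be weakly decreasing finite sequences of nonnegative integers. Say d is 1step-majorized by c (written d ≺' c) if, setting h = min{i : c_i < d_i} (with c_{m+1} = −∞, so h exists and h ≤ m+1), one has c_i = d_{i+1} for all h ≤ i ≤ m. Let r, s be the conjugate partitions of d and c respectively (so r corresponds to the longer sequence d), with r_0 = m+1 and s_0 = m, and view them as weakly decreasing sequences (r_0, r_1, ...) and (s_0, s_1, ...). Then d ≺' c holds if and only if s is conjugate-majorized by r, i.e., r_0 = s_0 + 1 and r_i = s_i + 1 for all 0 ≤ i ≤ g, where g = max{i : r_i > s_i}. -/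
/-- Proposition 4.5: `d ≺' c` (1step-generalized majorization of chains) holds iff
`s ∠ r` (conjugate majorization of the conjugate partitions, with `r_0 = m+1`,
`s_0 = m` prepended).  Here `c` has length `m`, `d` has length `m+1`, `r` is the
conjugate of `d` and `s` the conjugate of `c`.  The condition `s ∠ r` is expressed
as: `r_0 = s_0 + 1` and `r_i = s_i + 1` for every `i ≤ g = max{j : r_j > s_j}`,
i.e. for every `i` such that some `j ≥ i` has `r_j > s_j`. -/
theorem stmt4 (m : ℕ) (c d : ℕ → ℕ)
    (hc : ∀ i j, 1 ≤ i → i ≤ j → j ≤ m → c j ≤ c i)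
    (hd : ∀ i j, 1 ≤ i → i ≤ j → j ≤ m + 1 → d j ≤ d i)
    (r s : ℕ → ℕ)
    (hr0 : r 0 = m + 1)
    (hr : ∀ k, 1 ≤ k → r k = ((Finset.Icc 1 (m + 1)).filter fun i => k ≤ d i).card)
    (hs0 : s 0 = m)
    (hs : ∀ k, 1 ≤ k → s k = ((Finset.Icc 1 m).filter fun i => k ≤ c i).card) :
    (∃ h, 1 ≤ h ∧ h ≤ m + 1 ∧
        (∀ i, 1 ≤ i → i < h → d i ≤ c i) ∧
        (h ≤ m → c h < d h) ∧
        (∀ i, h ≤ i → i ≤ m → c i = d (i + 1)))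
      ↔ (r 0 = s 0 + 1 ∧ ∀ i, (∃ j, i ≤ j ∧ s j < r j) → r i = s i + 1) := by
  -- Galois characterization of r
  have hrG : ∀ k t, 1 ≤ k → 1 ≤ t → t ≤ m + 1 → (t ≤ r k ↔ k ≤ d t) := by
    intro k t hk ht1 ht2
    rw [hr k hk]
    constructor
    · intro hle
      by_contra hkd
      push_neg at hkd
      have hsub : (Finset.Icc 1 (m + 1)).filter (fun i => k ≤ d i) ⊆
          Finset.Icc 1 (t - 1) := by
        intro j hj
        simp only [Finset.mem_filter, Finset.mem_Icc] at hj ⊢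
        refine ⟨hj.1.1, ?_⟩
        by_contra hjt
        push_neg at hjt
        have : d j ≤ d t := hd t j ht1 (by omega) hj.1.2
        omega
      have := Finset.card_le_card hsub
      rw [Nat.card_Icc] at this
      omega
    · intro hkd
      have hsub : Finset.Icc 1 t ⊆
          (Finset.Icc 1 (m + 1)).filter (fun i => k ≤ d i) := by
        intro j hj
        simp only [Finset.mem_Icc, Finset.mem_filter] at hj ⊢
        exact ⟨⟨hj.1, by omega⟩, le_trans hkd (hd j t hj.1 hj.2 ht2)⟩
      have := Finset.card_le_card hsub
      rw [Nat.card_Icc] at this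
      omega
  -- Galois characterization of s
  have hsG : ∀ k t, 1 ≤ k → 1 ≤ t → t ≤ m → (t ≤ s k ↔ k ≤ c t) := by
    intro k t hk ht1 ht2
    rw [hs k hk]
    constructor
    · intro hle
      by_contra hkd
      push_neg at hkd
      have hsub : (Finset.Icc 1 m).filter (fun i => k ≤ c i) ⊆
          Finset.Icc 1 (t - 1) := by
        intro j hj
        simp only [Finset.mem_filter, Finset.mem_Icc] at hj ⊢
        refine ⟨hj.1.1, ?_⟩
        by_contra hjt
        push_neg at hjt
        have : c j ≤ c t := hc t j ht1 (by omega) hj.1.2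
        omega
      have := Finset.card_le_card hsub
      rw [Nat.card_Icc] at this
      omega
    · intro hkd
      have hsub : Finset.Icc 1 t ⊆
          (Finset.Icc 1 m).filter (fun i => k ≤ c i) := by
        intro j hj
        simp only [Finset.mem_Icc, Finset.mem_filter] at hj ⊢
        exact ⟨⟨hj.1, by omega⟩, le_trans hkd (hc j t hj.1 hj.2 ht2)⟩
      have := Finset.card_le_card hsub
      rw [Nat.card_Icc] at this
      omega
  have hrB : ∀ k, 1 ≤ k → r k ≤ m + 1 := by
    intro k hk
    rw [hr k hk]
    have := Finset.card_filter_le (Finset.Icc 1 (m + 1)) (fun i => k ≤ d i)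
    rw [Nat.card_Icc] at this
    omega
  have hsB : ∀ k, 1 ≤ k → s k ≤ m := by
    intro k hk
    rw [hs k hk]
    have := Finset.card_filter_le (Finset.Icc 1 m) (fun i => k ≤ c i)
    rw [Nat.card_Icc] at this
    omega
  constructor
  · rintro ⟨h, h1, hm1, hlt, hch, heq⟩
    refine ⟨by omega, ?_⟩
    -- key facts
    have keyA : ∀ k, 1 ≤ k → k ≤ d h → r k = s k + 1 := by
      intro k hk hkd
      have hhr : h ≤ r k := (hrG k h hk h1 hm1).mpr hkd
      have hupper : s k < r k := by
        by_contra hle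
        push_neg at hle
        have hskm := hsB k hk
        have hsk1 : 1 ≤ s k := by omega
        have hkc : k ≤ c (s k) := (hsG k (s k) hk hsk1 hskm).mp le_rfl
        have hceq : c (s k) = d (s k + 1) := heq (s k) (by omega) hskm
        have : s k + 1 ≤ r k := (hrG k (s k + 1) hk (by omega) (by omega)).mpr
          (by omega)
        omega
      have hlower : r k ≤ s k + 1 := by
        have hrkm := hrB k hk
        by_contra hgt
        push_neg at hgt
        -- t := r k - 1 ∈ [1, m]; show k ≤ c t hence t ≤ s k, contradiction
        set t := r k - 1 with ht
        have ht1 : 1 ≤ t := by omega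
        have htm : t ≤ m := by omega
        have hkc : k ≤ c t := by
          by_cases hcase : t < h
          · -- t = h - 1 < h: c t ≥ d t ≥ d h ≥ k
            have h1' : d h ≤ d t := hd t h ht1 (by omega) hm1
            have h2' : d t ≤ c t := hlt t ht1 hcase
            omega
          · push_neg at hcase
            have hceq : c t = d (t + 1) := heq t hcase htm
            have : t + 1 ≤ r k := by omega
            have := (hrG k (t + 1) hk (by omega) (by omega)).mp this
            omega
        have : t ≤ s k := (hsG k t hk ht1 htm).mpr hkc
        omega
      omega
    have keyB : ∀ k, 1 ≤ k → d h < k → r k ≤ s k := by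
      intro k hk hdk
      have hrh : r k < h := by
        by_contra hge
        push_neg at hge
        have := (hrG k h hk h1 hm1).mp hge
        omega
      by_cases hz : r k = 0
      · omega
      · have ht1 : 1 ≤ r k := by omega
        have htm : r k ≤ m := by omega
        have hkd' : k ≤ d (r k) := (hrG k (r k) hk ht1 (by omega)).mp le_rfl
        have hdc : d (r k) ≤ c (r k) := hlt (r k) ht1 hrh
        have : r k ≤ s k := (hsG k (r k) hk ht1 htm).mpr (by omega)
        omega
    rintro i ⟨j, hij, hji⟩
    by_cases hi0 : i = 0
    · subst hi0; omega
    · have hi1 : 1 ≤ i := by omega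
      have hj1 : 1 ≤ j := by omega
      have hjd : j ≤ d h := by
        by_contra hgt
        push_neg at hgt
        have := keyB j hj1 hgt
        omega
      exact keyA i hi1 (by omega)
  · rintro ⟨-, P⟩
    have hP1 : ∀ k, r k ≤ s k + 1 := by
      intro k
      by_contra hgt
      push_neg at hgt
      have := P k ⟨k, le_rfl, by omega⟩
      omega
    have hP2 : ∀ i j, i ≤ j → s j < r j → r i = s i + 1 := fun i j hij hj =>
      P i ⟨j, hij, hj⟩
    have hQ : ∃ i, (i = m + 1 ∨ (1 ≤ i ∧ i ≤ m ∧ c i < d i)) := ⟨m + 1, Or.inl rfl⟩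
    set h := Nat.find hQ with hhdef
    have hspec := Nat.find_spec hQ
    have h1 : 1 ≤ h := by
      rcases Nat.eq_zero_or_pos h with hz | hp
      · exfalso
        have : (0 = m + 1 ∨ (1 ≤ 0 ∧ 0 ≤ m ∧ c 0 < d 0)) := hz ▸ hspec
        omega
      · exact hp
    have hm1 : h ≤ m + 1 := Nat.find_le (Or.inl rfl)
    have hlt : ∀ i, 1 ≤ i → i < h → d i ≤ c i := by
      intro i hi1 hih
      have hmin := Nat.find_min hQ hih
      push_neg at hmin
      have := hmin.2 hi1
      omega
    have hch : h ≤ m → c h < d h := by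
      intro hhm
      rcases hspec with heq | hlt'
      · omega
      · exact hlt'.2.2
    refine ⟨h, h1, hm1, hlt, hch, ?_⟩
    intro i hhi him
    have hi1 : 1 ≤ i := by omega
    have hhm : h ≤ m := by omega
    have hchd : c h < d h := hch hhm
    -- (a) d (i+1) ≤ c i
    have ha : d (i + 1) ≤ c i := by
      by_contra hgt
      push_neg at hgt
      set k := c i + 1 with hk
      have hk1 : 1 ≤ k := by omega
      have hrk : i + 1 ≤ r k := (hrG k (i + 1) hk1 (by omega) (by omega)).mpr
        (by omega)
      have hsk : s k < i := by
        by_contra hge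
        push_neg at hge
        have := (hsG k i hk1 hi1 him).mp hge
        omega
      have := hP1 k
      omega
    -- (b) c i ≤ d (i+1)
    have hb : c i ≤ d (i + 1) := by
      by_contra hgt
      push_neg at hgt
      set k := d (i + 1) + 1 with hk
      set k' := c h + 1 with hk'
      have hk1 : 1 ≤ k := by omega
      have hk'1 : 1 ≤ k' := by omega
      have hski : i ≤ s k := (hsG k i hk1 hi1 him).mpr (by omega)
      have hrki : r k ≤ i := by
        by_contra hge
        push_neg at hge
        have := (hrG k (i + 1) hk1 (by omega) (by omega)).mp (by omega)
        omega
      have hrk' : h ≤ r k' := (hrG k' h hk'1 h1 hm1).mpr (by omega)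
      have hsk' : s k' < h := by
        by_contra hge
        push_neg at hge
        have := (hsG k' h hk'1 h1 hhm).mp hge
        omega
      have hkk' : k ≤ k' := by
        have : c i ≤ c h := hc h i h1 hhi him
        omega
      have := hP2 k k' hkk' (by omega)
      omega
    omega
end

section
/- Let c = (c_1, ..., c_m) and d = (d_1, ..., d_m) be weakly decreasing finite sequences of nonnegative integers with c ≠ d. Define ℓ = max{i : c_i ≠ d_i}, f = max{i ∈ {1,...,ℓ} : c_i < d_{i−1}} and f' = max{i ∈ {1,...,ℓ} : d_i < c_{i−1}}, where c_0 = d_0 = +∞. Let r, s be the conjugate partitions of c and d with r_0 = s_0 = m. Define x = min{i ≥ 1 : r_i ≠ s_i}, e = min{i ≥ x−1 : s_{i+1} ≥ r_{i+1}} and e' = min{i ≥ x−1 : r_{i+1} ≥ s_{i+1}}. Then e = c_f and e' = d_{f'}. -/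
/-- Galois connection between a weakly decreasing sequence and its conjugate. -/
lemma conj_iff (m : ℕ) (c : ℕ → ℕ) (hc : ∀ i j, 1 ≤ i → i ≤ j → j ≤ m → c j ≤ c i)
    (r : ℕ → ℕ) (hr : ∀ k, 1 ≤ k → r k = ((Finset.Icc 1 m).filter fun i => k ≤ c i).card)
    (k i : ℕ) (hk : 1 ≤ k) (hi1 : 1 ≤ i) (hi2 : i ≤ m) : i ≤ r k ↔ k ≤ c i := by
  constructor
  · intro h
    by_contra hlt
    push_neg at hlt
    have hsub : ((Finset.Icc 1 m).filter fun j => k ≤ c j) ⊆ Finset.Icc 1 (i - 1) := by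
      intro j hj
      simp only [Finset.mem_filter, Finset.mem_Icc] at hj ⊢
      obtain ⟨⟨hj1, hj2⟩, hjc⟩ := hj
      refine ⟨hj1, ?_⟩
      by_contra hji
      push_neg at hji
      have := hc i j hi1 (by omega) hj2
      omega
    have : r k ≤ i - 1 := by
      rw [hr k hk]
      calc _ ≤ (Finset.Icc 1 (i - 1)).card := Finset.card_le_card hsub
        _ = i - 1 := by simp
    omega
  · intro h
    rw [hr k hk]
    have hsub : Finset.Icc 1 i ⊆ (Finset.Icc 1 m).filter fun j => k ≤ c j := by
      intro j hj
      simp only [Finset.mem_Icc] at hj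
      simp only [Finset.mem_filter, Finset.mem_Icc]
      exact ⟨⟨hj.1, le_trans hj.2 hi2⟩, le_trans h (hc j i hj.1 hj.2 hi2)⟩
    calc i = (Finset.Icc 1 i).card := by simp
      _ ≤ _ := Finset.card_le_card hsub

lemma conj_le (m : ℕ) (c : ℕ → ℕ)
    (r : ℕ → ℕ) (hr : ∀ k, 1 ≤ k → r k = ((Finset.Icc 1 m).filter fun i => k ≤ c i).card)
    (k : ℕ) (hk : 1 ≤ k) : r k ≤ m := by
  rw [hr k hk]
  calc _ ≤ (Finset.Icc 1 m).card := Finset.card_filter_le _ _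
    _ = m := by simp

lemma conj_mono (m : ℕ) (c : ℕ → ℕ)
    (r : ℕ → ℕ) (hr : ∀ k, 1 ≤ k → r k = ((Finset.Icc 1 m).filter fun i => k ≤ c i).card)
    (k k' : ℕ) (hk : 1 ≤ k) (hkk : k ≤ k') : r k' ≤ r k := by
  rw [hr k hk, hr k' (le_trans hk hkk)]
  apply Finset.card_le_card
  intro i hi
  simp only [Finset.mem_filter, Finset.mem_Icc] at hi ⊢
  omega

/-- The key one-sided lemma: `e = c f`. -/
lemma key (m : ℕ) (c d : ℕ → ℕ)
    (hc : ∀ i j, 1 ≤ i → i ≤ j → j ≤ m → c j ≤ c i)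
    (hd : ∀ i j, 1 ≤ i → i ≤ j → j ≤ m → d j ≤ d i)
    (r s : ℕ → ℕ)
    (hr : ∀ k, 1 ≤ k → r k = ((Finset.Icc 1 m).filter fun i => k ≤ c i).card)
    (hs : ∀ k, 1 ≤ k → s k = ((Finset.Icc 1 m).filter fun i => k ≤ d i).card)
    (ℓ f x e : ℕ)
    (hl1 : 1 ≤ ℓ) (hl2 : ℓ ≤ m) (hl3 : c ℓ ≠ d ℓ)
    (hl4 : ∀ i, ℓ < i → i ≤ m → c i = d i)
    (hf1 : 1 ≤ f) (hf2 : f ≤ ℓ) (hf3 : 1 < f → c f < d (f - 1))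
    (hf4 : ∀ i, f < i → i ≤ ℓ → d (i - 1) ≤ c i)
    (hx1 : 1 ≤ x) (hx2 : r x ≠ s x) (hx3 : ∀ i, 1 ≤ i → i < x → r i = s i)
    (he1 : x - 1 ≤ e) (he2 : r (e + 1) ≤ s (e + 1))
    (he3 : ∀ i, x - 1 ≤ i → i < e → s (i + 1) < r (i + 1)) :
    e = c f := by
  have galc := conj_iff m c hc r hr
  have gald := conj_iff m d hd s hs
  have hfm : f ≤ m := le_trans hf2 hl2
  -- Step (c): x ≤ c f + 1
  have hxcf : x ≤ c f + 1 := by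
    -- find k ≤ c f + 1 with r k ≠ s k
    have : ∃ k, 1 ≤ k ∧ k ≤ c f + 1 ∧ r k ≠ s k := by
      rcases lt_or_gt_of_ne hl3 with h | h
      · -- c ℓ < d ℓ, take k = c ℓ + 1
        refine ⟨c ℓ + 1, by omega, by have := hc f ℓ hf1 hf2 hl2; omega, ?_⟩
        have hsl : ℓ ≤ s (c ℓ + 1) := (gald (c ℓ + 1) ℓ (by omega) hl1 hl2).mpr (by omega)
        have hrl : ¬ ℓ ≤ r (c ℓ + 1) := by
          rw [galc (c ℓ + 1) ℓ (by omega) hl1 hl2]; omega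
        omega
      · -- d ℓ < c ℓ, take k = d ℓ + 1
        have hdlcf : d ℓ ≤ c f := by
          rcases eq_or_lt_of_le hf2 with heq | hlt
          · rw [heq]; omega
          · have h1 : d ℓ ≤ d f := hd f ℓ hf1 hf2 hl2
            have h2 : d f ≤ c (f + 1) := by
              have := hf4 (f + 1) (by omega) (by omega)
              simpa using this
            have h3 : c (f + 1) ≤ c f := hc f (f + 1) hf1 (by omega) (by omega)
            omega
        refine ⟨d ℓ + 1, by omega, by omega, ?_⟩
        have hrl : ℓ ≤ r (d ℓ + 1) := (galc (d ℓ + 1) ℓ (by omega) hl1 hl2).mpr (by omega)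
        have hsl : ¬ ℓ ≤ s (d ℓ + 1) := by
          rw [gald (d ℓ + 1) ℓ (by omega) hl1 hl2]; omega
        omega
    obtain ⟨k, hk1, hk2, hk3⟩ := this
    by_contra hcon
    exact hk3 (hx3 k hk1 (by omega))
  -- min (c ℓ) (d ℓ) < x
  have hmin : min (c ℓ) (d ℓ) < x := by
    by_contra hcon
    push_neg at hcon
    apply hx2
    rw [hr x hx1, hs x hx1]
    congr 1
    apply Finset.filter_congr
    intro i hi
    simp only [Finset.mem_Icc] at hi
    rcases le_or_gt i ℓ with hil | hil
    · have h1 : c ℓ ≤ c i := hc i ℓ hi.1 hil hl2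
      have h2 : d ℓ ≤ d i := hd i ℓ hi.1 hil hl2
      omega
    · rw [hl4 i hil hi.2]
  -- r x ≤ ℓ
  have hrxl : r x ≤ ℓ := by
    by_contra hcon
    push_neg at hcon
    apply hx2
    have hrxm : r x ≤ m := conj_le m c r hr x hx1
    have hsxm : s x ≤ m := conj_le m d s hs x hx1
    have hcrx : x ≤ c (r x) := (galc x (r x) hx1 (by omega) hrxm).mp le_rfl
    have hdrx : x ≤ d (r x) := by rw [← hl4 (r x) hcon hrxm]; exact hcrx
    have h1 : r x ≤ s x := (gald x (r x) hx1 (by omega) hrxm).mpr hdrx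
    have hsxl : ℓ < s x := by omega
    have hdsx : x ≤ d (s x) := (gald x (s x) hx1 (by omega) hsxm).mp le_rfl
    have hcsx : x ≤ c (s x) := by rw [hl4 (s x) hsxl hsxm]; exact hdsx
    have h2 : s x ≤ r x := (galc x (s x) hx1 (by omega) hsxm).mpr hcsx
    omega
  -- Step (a): r (c f + 1) ≤ s (c f + 1)
  have ha : r (c f + 1) ≤ s (c f + 1) := by
    have hrle : ¬ f ≤ r (c f + 1) := by
      rw [galc (c f + 1) f (by omega) hf1 hfm]; omega
    rcases eq_or_lt_of_le hf1 with heq | hlt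
    · omega
    · have h3 := hf3 hlt
      have hsge : f - 1 ≤ s (c f + 1) :=
        (gald (c f + 1) (f - 1) (by omega) (by omega) (by omega)).mpr (by omega)
      omega
  -- Step (b): for x ≤ k ≤ c f, s k < r k
  have hb : ∀ k, x ≤ k → k ≤ c f → s k < r k := by
    intro k hxk hkcf
    have hk1 : 1 ≤ k := le_trans hx1 hxk
    set t := r k with ht
    have htl : t ≤ ℓ := le_trans (conj_mono m c r hr x k hx1 hxk) hrxl
    have htf : f ≤ t := (galc k f hk1 hf1 hfm).mpr hkcf
    have ht1 : 1 ≤ t := le_trans hf1 htf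
    have htm : t ≤ m := le_trans htl hl2
    have hct : k ≤ c t := (galc k t hk1 ht1 htm).mp le_rfl
    have hdt : d t < k := by
      rcases eq_or_lt_of_le htl with heq | hlt
      · -- t = ℓ : then k ≤ c ℓ, and min < x forces d ℓ < x ≤ k
        rw [heq]
        rw [heq] at hct
        omega
      · -- t < ℓ : d t ≤ c (t+1) < k
        have h1 : d t ≤ c (t + 1) := by
          have := hf4 (t + 1) (by omega) (by omega)
          simpa using this
        have h2 : c (t + 1) < k := by
          by_contra hcon
          push_neg at hcon
          have := (galc k (t + 1) hk1 (by omega) (by omega)).mpr hcon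
          omega
        omega
    have : ¬ t ≤ s k := by
      rw [gald k t hk1 ht1 htm]; omega
    omega
  -- conclude
  rcases lt_trichotomy e (c f) with h | h | h
  · have := hb (e + 1) (by omega) (by omega)
    omega
  · exact h
  · have := he3 (c f) (by omega) h
    have := ha
    omega

/-- Lemma 4.6: with `c ≠ d` weakly decreasing sequences of length `m`, `r`, `s` their
conjugate partitions (with `r_0 = s_0 = m`), `ℓ = max{i : c_i ≠ d_i}`,
`f = max{i ≤ ℓ : c_i < d_{i−1}}`, `f' = max{i ≤ ℓ : d_i < c_{i−1}}` (convention
`c_0 = d_0 = +∞`, so the condition holds automatically at `i = 1`),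
`x = min{i : r_i ≠ s_i}`, `e = min{i ≥ x−1 : s_{i+1} ≥ r_{i+1}}` and
`e' = min{i ≥ x−1 : r_{i+1} ≥ s_{i+1}}`, one has `e = c_f` and `e' = d_{f'}`. -/
theorem stmt5 (m : ℕ) (c d : ℕ → ℕ)
    (hc : ∀ i j, 1 ≤ i → i ≤ j → j ≤ m → c j ≤ c i)
    (hd : ∀ i j, 1 ≤ i → i ≤ j → j ≤ m → d j ≤ d i)
    (hne : ∃ i, 1 ≤ i ∧ i ≤ m ∧ c i ≠ d i)
    (r s : ℕ → ℕ)
    (hr0 : r 0 = m) (hs0 : s 0 = m)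
    (hr : ∀ k, 1 ≤ k → r k = ((Finset.Icc 1 m).filter fun i => k ≤ c i).card)
    (hs : ∀ k, 1 ≤ k → s k = ((Finset.Icc 1 m).filter fun i => k ≤ d i).card)
    (ℓ f f' x e e' : ℕ)
    (hl1 : 1 ≤ ℓ) (hl2 : ℓ ≤ m) (hl3 : c ℓ ≠ d ℓ)
    (hl4 : ∀ i, ℓ < i → i ≤ m → c i = d i)
    (hf1 : 1 ≤ f) (hf2 : f ≤ ℓ) (hf3 : 1 < f → c f < d (f - 1))
    (hf4 : ∀ i, f < i → i ≤ ℓ → d (i - 1) ≤ c i)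
    (hf'1 : 1 ≤ f') (hf'2 : f' ≤ ℓ) (hf'3 : 1 < f' → d f' < c (f' - 1))
    (hf'4 : ∀ i, f' < i → i ≤ ℓ → c (i - 1) ≤ d i)
    (hx1 : 1 ≤ x) (hx2 : r x ≠ s x) (hx3 : ∀ i, 1 ≤ i → i < x → r i = s i)
    (he1 : x - 1 ≤ e) (he2 : r (e + 1) ≤ s (e + 1))
    (he3 : ∀ i, x - 1 ≤ i → i < e → s (i + 1) < r (i + 1))
    (he'1 : x - 1 ≤ e') (he'2 : s (e' + 1) ≤ r (e' + 1))
    (he'3 : ∀ i, x - 1 ≤ i → i < e' → r (i + 1) < s (i + 1)) :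
    e = c f ∧ e' = d f' := by
  constructor
  · exact key m c d hc hd r s hr hs ℓ f x e hl1 hl2 hl3 hl4 hf1 hf2 hf3 hf4
      hx1 hx2 hx3 he1 he2 he3
  · exact key m d c hd hc s r hs hr ℓ f' x e' hl1 hl2 (Ne.symm hl3)
      (fun i h1 h2 => (hl4 i h1 h2).symm) hf'1 hf'2 hf'3 hf'4
      hx1 (Ne.symm hx2) (fun i h1 h2 => (hx3 i h1 h2).symm) he'1 he'2 he'3
end

section
/- Let L_{k−1}(s) ∈ F[s]^{(k−1)×k} be the singular pencil with entries s on positions (j,j) and 1 on positions (j,j+1). Then for every λ ∈ F ∪ {∞} and every 0 ≤ i ≤ k, dim L^i_λ(L_{k−1}(s)) = i; consequently w_i(λ, L_{k−1}(s)) = 1 for 1 ≤ i ≤ k. -/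
open Matrix

variable {F : Type*} [Field F]

/-- The pair `(M, N)` defining Jordan chains of the pencil `A(s) = A₀ + s·A₁` at
`λ ∈ F ∪ {∞}` (`none` denotes `∞`): for `λ ∈ F`, `M = A(λ) = A₀ + λ·A₁` and
`N = A₁`; for `λ = ∞`, `M = A₁` and `N = A₀`. -/
def jordanPair {p q : Type*} (A0 A1 : Matrix p q F) : Option F → Matrix p q F × Matrix p q F
  | none => (A1, A0)
  | some lam => (A0 + lam • A1, A1)

/-- `(x k, …, x 0)` is a right Jordan chain of length `k + 1` for the pair `(M, N)`:
`x 0 ≠ 0`, `M (x 0) = 0` and `M (x i) = −N (x (i−1))` for `1 ≤ i ≤ k`. -/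
def IsJordanChain {p q : Type*} [Fintype q] (M N : Matrix p q F) (k : ℕ) (x : ℕ → q → F) : Prop :=
  x 0 ≠ 0 ∧ M.mulVec (x 0) = 0 ∧ ∀ i, 1 ≤ i → i ≤ k → M.mulVec (x i) = -(N.mulVec (x (i - 1)))

/-- `Lspace M N ℓ` : the span of all vectors appearing in Jordan chains of length at
most `ℓ` (so `Lspace M N 0 = {0}`). -/
def Lspace {p q : Type*} [Fintype q] (M N : Matrix p q F) (ℓ : ℕ) : Submodule F (q → F) :=
  Submodule.span F {v | ∃ k, k + 1 ≤ ℓ ∧ ∃ x, IsJordanChain M N k x ∧ ∃ j ≤ k, v = x j}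

/-- The generalized Weyr characteristic
`w_i(λ, A(s)) = dim (L^i_λ(A(s)) / L^{i−1}_λ(A(s)))`. -/
noncomputable def weyr {p q : Type*} [Fintype q] (A0 A1 : Matrix p q F) (lam : Option F)
    (i : ℕ) : ℕ :=
  Module.finrank F (Lspace (jordanPair A0 A1 lam).1 (jordanPair A0 A1 lam).2 i)
    - Module.finrank F (Lspace (jordanPair A0 A1 lam).1 (jordanPair A0 A1 lam).2 (i - 1))

lemma Lspace_eq_span {p q : Type*} [Fintype q] (M N : Matrix p q F) (w : ℕ → q → F) (n : ℕ)
    (hw0 : w 0 ≠ 0) (hM0 : M.mulVec (w 0) = 0)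
    (hker : ∀ x : q → F, M.mulVec x = 0 → ∃ c : F, x = c • w 0)
    (hrec : ∀ j, j + 2 ≤ n → M.mulVec (w (j + 1)) = -(N.mulVec (w j)))
    (ℓ : ℕ) (hℓ : ℓ ≤ n) :
    Lspace M N ℓ = Submodule.span F (w '' Set.Iio ℓ) := by
  apply le_antisymm
  · rw [Lspace, Submodule.span_le]
    rintro v ⟨m, hm, x, hx, j, hj, rfl⟩
    have key : ∀ j ≤ m, ∃ c : ℕ → F, x j = ∑ t ∈ Finset.range (j + 1), c t • w t := by
      intro j
      induction j with
      | zero =>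
        intro _
        obtain ⟨c, hc⟩ := hker (x 0) hx.2.1
        exact ⟨fun _ => c, by simp [hc]⟩
      | succ j ih =>
        intro hj1
        obtain ⟨c, hc⟩ := ih (by omega)
        have hMx : M.mulVec (x (j + 1)) = -(N.mulVec (x j)) := by
          simpa using hx.2.2 (j + 1) (by omega) hj1
        set y : q → F := ∑ t ∈ Finset.range (j + 1), c t • w (t + 1) with hy
        have hMy : M.mulVec y = -(N.mulVec (x j)) := by
          have h1 : M.mulVec y = ∑ t ∈ Finset.range (j + 1), c t • M.mulVec (w (t + 1)) := by
            simp only [hy, ← Matrix.mulVecLin_apply, map_sum, _root_.map_smul]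
          rw [h1]
          have h2 : ∀ t ∈ Finset.range (j + 1), c t • M.mulVec (w (t + 1))
              = -(c t • N.mulVec (w t)) := by
            intro t ht
            rw [hrec t (by simp at ht; omega)]
            simp
          rw [Finset.sum_congr rfl h2, Finset.sum_neg_distrib]
          congr 1
          rw [hc]
          simp only [← Matrix.mulVecLin_apply, map_sum, _root_.map_smul]
        have hz : M.mulVec (x (j + 1) - y) = 0 := by
          have : M.mulVec (x (j + 1) - y) = M.mulVec (x (j + 1)) - M.mulVec y := by
            simp only [← Matrix.mulVecLin_apply, map_sub]
          rw [this, hMx, hMy, sub_self]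
        obtain ⟨d, hd⟩ := hker _ hz
        refine ⟨fun t => if t = 0 then d else c (t - 1), ?_⟩
        have hx1 : x (j + 1) = y + d • w 0 := by
          rw [← hd]; abel
        rw [hx1, Finset.sum_range_succ']
        congr 1
    obtain ⟨c, hc⟩ := key j hj
    rw [hc]
    apply Submodule.sum_mem
    intro t ht
    apply Submodule.smul_mem
    apply Submodule.subset_span
    exact ⟨t, by simp only [Set.mem_Iio]; simp at ht; omega, rfl⟩
  · rw [Submodule.span_le]
    rintro v ⟨j, hj, rfl⟩
    simp only [Set.mem_Iio] at hj
    apply Submodule.subset_span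
    refine ⟨ℓ - 1, by omega, w, ⟨hw0, hM0, ?_⟩, j, by omega, rfl⟩
    intro i hi1 hi2
    obtain ⟨i', rfl⟩ : ∃ i', i = i' + 1 := ⟨i - 1, by omega⟩
    simpa using hrec i' (by omega)

lemma finrank_span_Iio {q : Type*} [Fintype q] (w : ℕ → q → F) (n : ℕ)
    (hw : LinearIndependent F fun j : Fin n => w j) (ℓ : ℕ) (hℓ : ℓ ≤ n) :
    Module.finrank F (Submodule.span F (w '' Set.Iio ℓ)) = ℓ := by
  have hv : LinearIndependent F fun t : Fin ℓ => w t.val := by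
    have := hw.comp (fun t : Fin ℓ => Fin.castLE hℓ t)
      (fun a b hab => by simpa [Fin.ext_iff] using congrArg Fin.val hab)
    exact this
  have hr : Set.range (fun t : Fin ℓ => w t.val) = w '' Set.Iio ℓ := by
    ext v
    constructor
    · rintro ⟨t, rfl⟩; exact ⟨t, t.2, rfl⟩
    · rintro ⟨t, ht, rfl⟩; exact ⟨⟨t, ht⟩, rfl⟩
  rw [← hr, finrank_span_eq_card hv]
  simp

lemma sum_if_mul {k : ℕ} (x : Fin k → F) (t : Fin k) :
    (∑ j : Fin k, (if (j : ℕ) = (t : ℕ) then (1:F) else 0) * x j) = x t := by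
  rw [Finset.sum_eq_single t]
  · simp
  · intro b _ hb
    have : (b : ℕ) ≠ (t : ℕ) := fun h => hb (Fin.ext h)
    simp [this]
  · simp

lemma key_id (l : F) (i j : ℕ) :
    l * ((-1 : F) ^ (j+1) * (Nat.choose i (j+1) : F) * (-l) ^ (i - (j+1)))
      + (-1 : F) ^ (j+1) * (Nat.choose (i+1) (j+1) : F) * (-l) ^ (i + 1 - (j+1))
      = -((-1 : F) ^ j * (Nat.choose i j : F) * (-l) ^ (i - j)) := by
  rcases lt_trichotomy i j with h | h | h
  · rw [Nat.choose_eq_zero_of_lt (by omega : i < j + 1),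
      Nat.choose_eq_zero_of_lt (by omega : i + 1 < j + 1),
      Nat.choose_eq_zero_of_lt h]
    simp
  · subst h
    rw [Nat.choose_eq_zero_of_lt (by omega : i < i + 1), Nat.choose_self, Nat.choose_self]
    simp [pow_succ]
  · obtain ⟨m, rfl⟩ : ∃ m, i = j + 1 + m := ⟨i - (j+1), by omega⟩
    have e1 : j + 1 + m - (j+1) = m := by omega
    have e2 : j + 1 + m - j = m + 1 := by omega
    have e3 : j + 1 + m + 1 - (j+1) = m + 1 := by omega
    have hc : ((j+1+m+1).choose (j+1) : F)
        = ((j+1+m).choose j : F) + ((j+1+m).choose (j+1) : F) := by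
      have := Nat.choose_succ_succ (j+1+m) j
      exact_mod_cast congrArg (Nat.cast : ℕ → F) this
    rw [e1, e2, e3, hc, pow_succ, pow_succ]
    ring
/-- Proposition 3.6 (3): for the singular block `L_{k−1}(s) ∈ F[s]^{(k−1)×k}` (row
`j` has `s` in column `j` and `1` in column `j+1`, so `A₁` has `1` at `(j,j)` and
`A₀` has `1` at `(j,j+1)`): `dim L^i_λ = i` for all `λ ∈ F ∪ {∞}` and `0 ≤ i ≤ k`,
hence `w_i(λ, L_{k−1}(s)) = 1` for `1 ≤ i ≤ k`. -/
theorem stmt11 (k : ℕ) (hk : 1 ≤ k)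
    (A0 A1 : Matrix (Fin (k - 1)) (Fin k) F)
    (hA0 : A0 = Matrix.of fun (i : Fin (k - 1)) (j : Fin k) =>
      if (j : ℕ) = (i : ℕ) + 1 then 1 else 0)
    (hA1 : A1 = Matrix.of fun (i : Fin (k - 1)) (j : Fin k) =>
      if (j : ℕ) = (i : ℕ) then 1 else 0) :
    (∀ (lam : Option F) (i : ℕ), i ≤ k →
        Module.finrank F (Lspace (jordanPair A0 A1 lam).1 (jordanPair A0 A1 lam).2 i) = i) ∧
    (∀ (lam : Option F) (i : ℕ), 1 ≤ i → i ≤ k → weyr A0 A1 lam i = 1) := by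
  have hA0mul : ∀ (x : Fin k → F) (r : Fin (k - 1)),
      A0.mulVec x r = x ⟨r.val + 1, by have := r.2; omega⟩ := by
    intro x r
    rw [hA0]
    simp only [Matrix.mulVec, dotProduct, Matrix.of_apply]
    exact sum_if_mul x ⟨r.val + 1, by have := r.2; omega⟩
  have hA1mul : ∀ (x : Fin k → F) (r : Fin (k - 1)),
      A1.mulVec x r = x ⟨r.val, by have := r.2; omega⟩ := by
    intro x r
    rw [hA1]
    simp only [Matrix.mulVec, dotProduct, Matrix.of_apply]
    exact sum_if_mul x ⟨r.val, by have := r.2; omega⟩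
  have main : ∀ (lam : Option F) (i : ℕ), i ≤ k →
      Module.finrank F (Lspace (jordanPair A0 A1 lam).1 (jordanPair A0 A1 lam).2 i) = i := by
    intro lam i hik
    cases lam with
    | some l =>
      set w : ℕ → Fin k → F :=
        fun j i => (-1 : F) ^ j * (Nat.choose i.val j : F) * (-l) ^ (i.val - j) with hw
      have hMmul : ∀ (x : Fin k → F) (r : Fin (k - 1)),
          (A0 + l • A1).mulVec x r
            = l * x ⟨r.val, by have := r.2; omega⟩ + x ⟨r.val + 1, by have := r.2; omega⟩ := by
        intro x r
        rw [Matrix.add_mulVec, Pi.add_apply, Matrix.smul_mulVec, Pi.smul_apply,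
          smul_eq_mul, hA0mul, hA1mul]
        ring
      have hw0 : w 0 ≠ 0 := by
        intro h
        have := congrFun h ⟨0, by omega⟩
        simp [hw] at this
      have hM0 : (A0 + l • A1).mulVec (w 0) = 0 := by
        funext r
        rw [hMmul, Pi.zero_apply]
        simp only [hw, pow_zero, Nat.choose_zero_right, Nat.cast_one, one_mul, Nat.sub_zero,
          pow_succ]
        ring
      have hker : ∀ x : Fin k → F, (A0 + l • A1).mulVec x = 0 → ∃ c : F, x = c • w 0 := by
        intro x hx
        have hstep : ∀ r : Fin (k - 1),
            x ⟨r.val + 1, by have := r.2; omega⟩ = -l * x ⟨r.val, by have := r.2; omega⟩ := by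
          intro r
          have := congrFun hx r
          rw [hMmul, Pi.zero_apply] at this
          linear_combination this
        have hall : ∀ (i : ℕ) (hi : i < k), x ⟨i, hi⟩ = x ⟨0, by omega⟩ * (-l) ^ i := by
          intro i
          induction i with
          | zero => intro hi; simp
          | succ i ih =>
            intro hi
            have hi' : i < k - 1 := by omega
            have h1 := hstep ⟨i, hi'⟩
            rw [h1, ih (by omega), pow_succ]
            ring
        refine ⟨x ⟨0, by omega⟩, ?_⟩
        funext i
        have := hall i.val i.2
        rw [Fin.eta] at this
        rw [this, Pi.smul_apply, smul_eq_mul]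
        simp [hw]
      have hrec : ∀ j, j + 2 ≤ k →
          (A0 + l • A1).mulVec (w (j + 1)) = -(A1.mulVec (w j)) := by
        intro j _
        funext r
        rw [hMmul, Pi.neg_apply, hA1mul]
        exact key_id l r.val j
      have hind : LinearIndependent F fun j : Fin k => w j.val := by
        rw [Fintype.linearIndependent_iff]
        intro g hg
        have H : ∀ (m : ℕ) (hm : m < k), g ⟨m, hm⟩ = 0 := by
          intro m
          induction m using Nat.strong_induction_on with
          | _ m ih =>
            intro hm
            have hgm := congrFun hg ⟨m, hm⟩
            rw [Finset.sum_apply] at hgm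
            simp only [Pi.smul_apply, smul_eq_mul, Pi.zero_apply] at hgm
            rw [Finset.sum_eq_single (⟨m, hm⟩ : Fin k)] at hgm
            · simp only [hw, Nat.choose_self, Nat.sub_self, pow_zero, Nat.cast_one, mul_one] at hgm
              rcases mul_eq_zero.mp hgm with h | h
              · exact h
              · exact absurd h (pow_ne_zero _ (by norm_num))
            · intro b _ hb
              rcases lt_or_gt_of_ne (show (b : ℕ) ≠ m from fun h => hb (Fin.ext h)) with hlt | hgt
              · have hb0 : g b = 0 := by
                  have := ih b.val hlt b.2
                  simpa using this
                simp [hb0]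
              · simp [hw, Nat.choose_eq_zero_of_lt hgt]
            · simp
        intro j
        have := H j.val j.2
        simpa using this
      have hp1 : (jordanPair A0 A1 (some l)).1 = A0 + l • A1 := rfl
      have hp2 : (jordanPair A0 A1 (some l)).2 = A1 := rfl
      rw [hp1, hp2, Lspace_eq_span (A0 + l • A1) A1 w k hw0 hM0 hker hrec i hik,
        finrank_span_Iio w k hind i hik]
    | none =>
      set w : ℕ → Fin k → F :=
        fun j i => if (i : ℕ) = k - 1 - j then (-1 : F) ^ j else 0 with hw
      have hw0 : w 0 ≠ 0 := by
        intro h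
        have := congrFun h ⟨k - 1, by omega⟩
        simp [hw] at this
      have hM0 : A1.mulVec (w 0) = 0 := by
        funext r
        rw [hA1mul, Pi.zero_apply]
        have : (r : ℕ) ≠ k - 1 := by have := r.2; omega
        simp [hw, this]
      have hker : ∀ x : Fin k → F, A1.mulVec x = 0 → ∃ c : F, x = c • w 0 := by
        intro x hx
        refine ⟨x ⟨k - 1, by omega⟩, ?_⟩
        funext i
        rw [Pi.smul_apply, smul_eq_mul]
        by_cases hi : (i : ℕ) = k - 1
        · have : i = ⟨k - 1, by omega⟩ := Fin.ext hi
          rw [this]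
          simp [hw]
        · have hi' : (i : ℕ) < k - 1 := by have := i.2; omega
          have := congrFun hx ⟨i.val, hi'⟩
          rw [hA1mul, Pi.zero_apply] at this
          rw [Fin.eta] at this
          rw [this]
          simp [hw, hi]
      have hrec : ∀ j, j + 2 ≤ k → A1.mulVec (w (j + 1)) = -(A0.mulVec (w j)) := by
        intro j hj
        funext r
        rw [hA1mul, Pi.neg_apply, hA0mul]
        show (if (r : ℕ) = k - 1 - (j + 1) then ((-1 : F)) ^ (j + 1) else 0)
          = -(if (r : ℕ) + 1 = k - 1 - j then (-1 : F) ^ j else 0)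
        by_cases hr : (r : ℕ) = k - 1 - (j + 1)
        · have h2 : (r : ℕ) + 1 = k - 1 - j := by omega
          rw [if_pos hr, if_pos h2, pow_succ]
          ring
        · have h2 : (r : ℕ) + 1 ≠ k - 1 - j := by omega
          rw [if_neg hr, if_neg h2, neg_zero]
      have hind : LinearIndependent F fun j : Fin k => w j.val := by
        rw [Fintype.linearIndependent_iff]
        intro g hg j
        have hgj := congrFun hg ⟨k - 1 - j.val, by omega⟩
        rw [Finset.sum_apply] at hgj
        simp only [Pi.smul_apply, smul_eq_mul, Pi.zero_apply] at hgj
        rw [Finset.sum_eq_single j] at hgj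
        · simp only [hw, if_true, eq_self_iff_true] at hgj
          rcases mul_eq_zero.mp hgj with h | h
          · exact h
          · exact absurd h (pow_ne_zero _ (by norm_num))
        · intro b _ hb
          have hb' : (b : ℕ) ≠ (j : ℕ) := fun h => hb (Fin.ext h)
          have : k - 1 - (j : ℕ) ≠ k - 1 - (b : ℕ) := by
            have := b.2; have := j.2; omega
          simp [hw, this]
        · simp
      have hp1 : (jordanPair A0 A1 (none : Option F)).1 = A1 := rfl
      have hp2 : (jordanPair A0 A1 (none : Option F)).2 = A0 := rfl
      rw [hp1, hp2, Lspace_eq_span A1 A0 w k hw0 hM0 hker hrec i hik,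
        finrank_span_Iio w k hind i hik]
  refine ⟨main, ?_⟩
  intro lam i hi1 hik
  rw [weyr, main lam i hik, main lam (i - 1) (by omega)]
  omega
end
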